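/- For every λ ∈ X⁺ and every k ≥ 1: E^k_λ = E¹_{λ⁰} · F(E¹_{λ¹}) · F²(E¹_{λ²}) ⋯ F^{k−1}(E¹_{λ^{k−1}}) · F^k(E⁰_{∑_{j≥k} p^{j−k} λ^j}). -/

import Mathlib

/-!
Setting: `X⁺ = I → ℕ` (componentwise addition) for a finite index set `I`, `p ≥ 2`.
`digit p lam k` is the `k`-th base-`p` digit `λ^k` of `lam` (so `λ^k ∈ X⁺_red` and
`lam = ∑_k p^k • λ^k`); `shift p k lam = ∑_{j≥k} p^{j-k} λ^j`;
`trunc p k lam = ∑_{0≤j≤k-1} p^j λ^j`.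
-/

namespace LusztigChar

variable {I : Type*} [Fintype I] {R : Type*} [CommRing R]

/-- The `k`-th digit `λ^k` of `λ ∈ X⁺ = I → ℕ` in base `p`. -/
def digit (p : ℕ) (lam : I → ℕ) (k : ℕ) : I → ℕ := fun i => lam i / p ^ k % p

/-- `∑_{j≥k} p^{j-k} λ^j ∈ X⁺` (a sum with finitely many nonzero terms). -/
noncomputable def shift (p k : ℕ) (lam : I → ℕ) : I → ℕ :=
  ∑ᶠ j : ℕ, p ^ j • digit p lam (k + j)

/-- `∑_{0≤j≤k-1} p^j λ^j ∈ X⁺`. -/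
def trunc (p k : ℕ) (lam : I → ℕ) : I → ℕ :=
  ∑ j ∈ Finset.range k, p ^ j • digit p lam j

/-- The recursive family `E^k : X⁺ → R` built from `E⁰ = E0` and the integers
`p_{μ,λ} = P μ λ`:  `E^k_λ = ∑_μ p_{μ, ∑_{j≥k-1} p^{j-k+1} λ^j} · E^{k-1}_{∑_{0≤j≤k-2} p^j λ^j + p^{k-1} μ}`
for `k ≥ 1`. -/
noncomputable def E (p : ℕ) (P : (I → ℕ) → (I → ℕ) → ℤ) (E0 : (I → ℕ) → R) :
    ℕ → (I → ℕ) → R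
  | 0 => E0
  | k + 1 => fun lam =>
      ∑ᶠ mu : I → ℕ, P mu (shift p k lam) • E p P E0 k (trunc p k lam + p ^ k • mu)

private lemma digit_sum_aux (p m : ℕ) :
    ∀ n, ∑ j ∈ Finset.range n, p ^ j * (m / p ^ j % p) = m % p ^ n
  | 0 => by simp [Nat.mod_one]
  | n + 1 => by
    rw [Finset.sum_range_succ, digit_sum_aux p m n, pow_succ, Nat.mod_mul]

private lemma shift_apply {p : ℕ} (hp : 2 ≤ p) (k : ℕ) (lam : I → ℕ) (i : I) :
    shift p k lam i = lam i / p ^ k := by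
  have hp1 : 1 < p := hp
  set S : ℕ := ∑ i, lam i with hS
  have hsub : Function.support (fun j => p ^ j • digit p lam (k + j)) ⊆
      ↑(Finset.range (S + 1)) := by
    intro j hj
    simp only [Function.mem_support] at hj
    have hd : digit p lam (k + j) ≠ 0 := fun h => hj (by rw [h, smul_zero])
    obtain ⟨i', hi'⟩ : ∃ i', digit p lam (k + j) i' ≠ 0 := by
      by_contra h; push_neg at h; exact hd (funext h)
    have h1 : lam i' / p ^ (k + j) ≠ 0 := fun h => hi' (by simp [digit, h])
    have h2 : p ^ (k + j) ≤ lam i' := le_of_not_gt (fun h => h1 (Nat.div_eq_of_lt h))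
    have h3 : j < p ^ (k + j) :=
      lt_of_lt_of_le (Nat.lt_pow_self (n := j) hp1) (Nat.pow_le_pow_right (by omega) (Nat.le_add_left j k))
    have h4 : lam i' ≤ S := Finset.single_le_sum (fun _ _ => Nat.zero_le _) (Finset.mem_univ i')
    simp only [Finset.coe_range, Set.mem_Iio]
    omega
  rw [shift, finsum_eq_sum_of_support_subset _ hsub, Finset.sum_apply]
  simp only [Pi.smul_apply, smul_eq_mul, digit]
  have hdiv : ∀ j, lam i / p ^ (k + j) = lam i / p ^ k / p ^ j := by
    intro j; rw [pow_add, Nat.div_div_eq_div_mul]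
  simp_rw [hdiv]
  rw [digit_sum_aux]
  apply Nat.mod_eq_of_lt
  have h4 : lam i ≤ S := Finset.single_le_sum (fun _ _ => Nat.zero_le _) (Finset.mem_univ i)
  have h5 : S + 1 < p ^ (S + 1) := Nat.lt_pow_self (n := S + 1) hp1
  have h6 : lam i / p ^ k ≤ lam i := Nat.div_le_self _ _
  omega

private lemma trunc_apply (p k : ℕ) (lam : I → ℕ) (i : I) :
    trunc p k lam i = lam i % p ^ k := by
  rw [trunc, Finset.sum_apply]
  simp only [Pi.smul_apply, smul_eq_mul, digit]
  exact digit_sum_aux p (lam i) k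

private lemma key_mod {p : ℕ} (hp : 2 ≤ p) {h k : ℕ} (hhk : h < k) (r b : ℕ) :
    (r + p ^ k * b) / p ^ h % p = r / p ^ h % p := by
  obtain ⟨d, rfl⟩ : ∃ d, k = h + d + 1 := ⟨k - h - 1, by omega⟩
  have hkeq : p ^ (h + d + 1) * b = p ^ h * (p * (p ^ d * b)) := by
    rw [pow_add, pow_add, pow_one]; ring
  rw [hkeq, Nat.add_mul_div_left _ _ (pow_pos (by omega : 0 < p) h),
    Nat.add_mul_mod_self_left]

private lemma digit_trunc_add {p : ℕ} (hp : 2 ≤ p) {h k : ℕ} (hhk : h < k)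
    (lam mu : I → ℕ) :
    digit p (trunc p k lam + p ^ k • mu) h = digit p lam h := by
  funext i
  show (trunc p k lam + p ^ k • mu) i / p ^ h % p = lam i / p ^ h % p
  simp only [Pi.add_apply, Pi.smul_apply, smul_eq_mul, trunc_apply]
  rw [key_mod hp hhk]
  conv_rhs => rw [← Nat.mod_add_div (lam i) (p ^ k)]
  rw [key_mod hp hhk]

private lemma shift_trunc_add {p : ℕ} (hp : 2 ≤ p) (k : ℕ) (lam mu : I → ℕ) :
    shift p k (trunc p k lam + p ^ k • mu) = mu := by
  funext i
  rw [shift_apply hp]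
  simp only [Pi.add_apply, Pi.smul_apply, smul_eq_mul, trunc_apply]
  rw [Nat.add_mul_div_left _ _ (pow_pos (by omega : 0 < p) k),
    Nat.div_eq_of_lt (Nat.mod_lt _ (pow_pos (by omega : 0 < p) k)), Nat.zero_add]

private lemma digit_shift {p : ℕ} (hp : 2 ≤ p) (k : ℕ) (lam : I → ℕ) :
    digit p (shift p k lam) 0 = digit p lam k := by
  funext i
  show shift p k lam i / p ^ 0 % p = lam i / p ^ k % p
  rw [shift_apply hp, pow_zero, Nat.div_one]

private lemma shift_shift {p : ℕ} (hp : 2 ≤ p) (k : ℕ) (lam : I → ℕ) :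
    shift p 1 (shift p k lam) = shift p (k + 1) lam := by
  funext i
  rw [shift_apply hp, shift_apply hp, shift_apply hp, pow_one, Nat.div_div_eq_div_mul,
    ← pow_succ]

private lemma le_finite (le : (I → ℕ) → (I → ℕ) → Prop) (N : (I → ℕ) →+ ℕ)
    (hN_zero : ∀ a, N a = 0 → a = 0) (hN_mono : ∀ a b, le a b → N a ≤ N b)
    (s : I → ℕ) : {mu : I → ℕ | le mu s}.Finite := by
  classical
  have hN_single : ∀ i : I, 1 ≤ N (Pi.single i 1) := by
    intro i
    rcases Nat.eq_zero_or_pos (N (Pi.single i 1)) with h | h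
    · exfalso
      have h2 := congrFun (hN_zero _ h) i
      simp [Pi.single_eq_same] at h2
    · exact h
  have hbound : ∀ mu : I → ℕ, ∀ i, mu i ≤ N mu := by
    intro mu i
    have h1 : (Pi.single i (mu i) : I → ℕ) = mu i • (Pi.single i 1 : I → ℕ) := by
      funext j
      by_cases h : j = i
      · subst h; simp
      · simp [Pi.single_eq_of_ne h]
    calc mu i ≤ mu i * N (Pi.single i 1) := Nat.le_mul_of_pos_right _ (hN_single i)
      _ = N (Pi.single i (mu i)) := by rw [h1, map_nsmul, smul_eq_mul]
      _ ≤ ∑ j, N (Pi.single j (mu j)) :=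
          Finset.single_le_sum (f := fun j => N (Pi.single j (mu j)))
            (fun _ _ => Nat.zero_le _) (Finset.mem_univ i)
      _ = N mu := by rw [← map_sum, Finset.univ_sum_single]
  apply Set.Finite.subset (Set.Finite.pi (fun _ : I => Set.finite_Iic (N s)))
  intro mu hmu
  simp only [Set.mem_pi, Set.mem_univ, Set.mem_Iic, forall_true_left]
  intro i
  exact le_trans (hbound mu i) (hN_mono mu s hmu)

private lemma E_one {p : ℕ} (hp : 2 ≤ p) (P : (I → ℕ) → (I → ℕ) → ℤ)
    (E0 : (I → ℕ) → R) (nu : I → ℕ) :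
    E p P E0 1 nu = ∑ᶠ mu : I → ℕ, P mu nu • E0 mu := by
  have h0 : shift p 0 nu = nu := funext fun i => by rw [shift_apply hp]; simp
  have h1 : ∀ mu : I → ℕ, trunc p 0 nu + p ^ 0 • mu = mu := by
    intro mu; simp [trunc]
  show (∑ᶠ mu : I → ℕ, P mu (shift p 0 nu) • E p P E0 0 (trunc p 0 nu + p ^ 0 • mu)) = _
  simp only [h0, h1]
  rfl

/-- paper 6(b): assuming the Steinberg-type identity
`E¹_λ = E¹_{λ⁰} · F(E⁰_{∑_{j≥1} p^{j-1} λ^j})`, for every `λ ∈ X⁺` and `k ≥ 1` one has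
`E^k_λ = E¹_{λ⁰} · F(E¹_{λ¹}) ⋯ F^{k-1}(E¹_{λ^{k-1}}) · F^k(E⁰_{∑_{j≥k} p^{j-k} λ^j})`. -/
theorem E_eq_prod_iterate {I : Type*} [Fintype I] {R : Type*} [CommRing R]
    (p : ℕ) (hp : 2 ≤ p)
    (le : (I → ℕ) → (I → ℕ) → Prop)
    (hle_refl : ∀ a, le a a)
    (hle_antisymm : ∀ a b, le a b → le b a → a = b)
    (hle_trans : ∀ a b c, le a b → le b c → le a c)
    (N : (I → ℕ) →+ ℕ)
    (hN_zero : ∀ a, N a = 0 → a = 0)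
    (hN_mono : ∀ a b, le a b → N a ≤ N b)
    (P : (I → ℕ) → (I → ℕ) → ℤ)
    (hP_le : ∀ mu lam, P mu lam ≠ 0 → le mu lam)
    (hP_diag : ∀ lam, P lam lam = 1)
    (E0 : (I → ℕ) → R)
    (F : R →+* R)
    (hSteinberg : ∀ lam : I → ℕ,
      E p P E0 1 lam = E p P E0 1 (digit p lam 0) * F (E0 (shift p 1 lam)))
    (k : ℕ) (hk : 1 ≤ k) (lam : I → ℕ) :
    E p P E0 k lam =
      (∏ h ∈ Finset.range k, (⇑F)^[h] (E p P E0 1 (digit p lam h))) *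
        (⇑F)^[k] (E0 (shift p k lam)) := by
  induction k, hk using Nat.le_induction generalizing lam with
  | base =>
    simpa only [Finset.prod_range_one, Function.iterate_zero, id_eq,
      Function.iterate_one] using hSteinberg lam
  | succ k hk ih =>
    set s := shift p k lam with hs
    have hfin : {mu : I → ℕ | le mu s}.Finite := le_finite le N hN_zero hN_mono s
    set T := hfin.toFinset with hT
    have hsupp : ∀ g : (I → ℕ) → R,
        Function.support (fun mu => P mu s • g mu) ⊆ ↑T := by
      intro g mu hmu
      simp only [Function.mem_support] at hmu
      have hP : P mu s ≠ 0 := fun h => hmu (by rw [h, zero_smul])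
      simpa [hT, Set.Finite.mem_toFinset] using hP_le mu s hP
    have hE1s : E p P E0 1 s = ∑ mu ∈ T, P mu s • E0 mu := by
      rw [E_one hp, finsum_eq_sum_of_support_subset _ (hsupp E0)]
    have hEexp : E p P E0 (k + 1) lam
        = ∑ mu ∈ T, P mu s • E p P E0 k (trunc p k lam + p ^ k • mu) := by
      show (∑ᶠ mu : I → ℕ, P mu s • E p P E0 k (trunc p k lam + p ^ k • mu)) = _
      exact finsum_eq_sum_of_support_subset _ (hsupp _)
    set C := ∏ h ∈ Finset.range k, (⇑F)^[h] (E p P E0 1 (digit p lam h)) with hC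
    have hterm : ∀ mu : I → ℕ, E p P E0 k (trunc p k lam + p ^ k • mu)
        = C * (⇑F)^[k] (E0 mu) := by
      intro mu
      rw [ih (trunc p k lam + p ^ k • mu)]
      congr 1
      · exact Finset.prod_congr rfl fun h hh => by
          rw [digit_trunc_add hp (Finset.mem_range.mp hh)]
      · rw [shift_trunc_add hp]
    rw [hEexp]
    simp_rw [hterm]
    have hmap : (⇑F)^[k] (∑ mu ∈ T, P mu s • E0 mu)
        = ∑ mu ∈ T, P mu s • (⇑F)^[k] (E0 mu) := by
      rw [← RingHom.coe_pow F k, map_sum]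
      exact Finset.sum_congr rfl fun mu _ => map_zsmul (F ^ k) _ _
    calc ∑ mu ∈ T, P mu s • (C * (⇑F)^[k] (E0 mu))
        = C * ∑ mu ∈ T, P mu s • (⇑F)^[k] (E0 mu) := by
          rw [Finset.mul_sum]
          exact Finset.sum_congr rfl fun mu _ => (mul_smul_comm _ _ _).symm
      _ = C * (⇑F)^[k] (E p P E0 1 s) := by rw [hE1s, hmap]
      _ = C * ((⇑F)^[k] (E p P E0 1 (digit p s 0)) * (⇑F)^[k + 1] (E0 (shift p 1 s))) := by
          rw [hSteinberg s, ← RingHom.coe_pow F k, map_mul, RingHom.coe_pow,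
            Function.iterate_succ_apply]
      _ = (∏ h ∈ Finset.range (k + 1), (⇑F)^[h] (E p P E0 1 (digit p lam h))) *
            (⇑F)^[k + 1] (E0 (shift p (k + 1) lam)) := by
          rw [digit_shift hp, shift_shift hp, Finset.prod_range_succ, ← hC, mul_assoc]

end LusztigChar
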